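/- Directional Lorentz–Luxemburg theorem: an F^n-directional Banach function space X over a σ-finite measure space with the directional saturation property satisfies the Fatou property if and only if X is Köthe reflexive (X'' = X with equal norms). -/

import Mathlib

set_option linter.unusedSectionVars false
set_option maxHeartbeats 1000000
set_option synthInstance.maxHeartbeats 200000

open MeasureTheory ENNReal Filter Topology

variable {𝕜 : Type*} [RCLike 𝕜] {n : ℕ}
  [MeasurableSpace (EuclideanSpace 𝕜 (Fin n))] [BorelSpace (EuclideanSpace 𝕜 (Fin n))]
  {Ω : Type*} [MeasurableSpace Ω]

/-- The Köthe dual (extended-valued) norm of an `𝔽ⁿ`-directional Banach function space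
encoded by its extended norm `eN`:
`‖g‖_{X'} = sup { ∫ |f·g| dμ : f measurable, ‖f‖_X ≤ 1 }`. -/
noncomputable def dirDualNorm (μ : Measure Ω) (eN : (Ω → EuclideanSpace 𝕜 (Fin n)) → ℝ≥0∞)
    (g : Ω → EuclideanSpace 𝕜 (Fin n)) : ℝ≥0∞ :=
  ⨆ f ∈ {f : Ω → EuclideanSpace 𝕜 (Fin n) | Measurable f ∧ eN f ≤ 1},
    ∫⁻ x, (‖(inner 𝕜 (f x) (g x) : 𝕜)‖₊ : ℝ≥0∞) ∂μ

lemma ofReal_norm_eq_coe_nnnorm {E : Type*} [SeminormedAddCommGroup E] (a : E) :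
    ENNReal.ofReal ‖a‖ = (‖a‖₊ : ℝ≥0∞) := ENNReal.ofReal_eq_coe_nnreal _

lemma dirDualNorm_smul (μ : Measure Ω) (eNN : (Ω → EuclideanSpace 𝕜 (Fin n)) → ℝ≥0∞)
    (g : Ω → EuclideanSpace 𝕜 (Fin n)) (c : 𝕜) :
    dirDualNorm μ eNN (fun x => c • g x) = ‖c‖₊ * dirDualNorm μ eNN g := by
  unfold dirDualNorm
  rw [ENNReal.mul_iSup]
  refine iSup_congr fun f => ?_
  rw [ENNReal.mul_iSup]
  refine iSup_congr fun hf => ?_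
  rw [← lintegral_const_mul' _ _ (by simp : ((‖c‖₊ : ℝ≥0∞)) ≠ ⊤)]
  refine lintegral_congr fun x => ?_
  rw [inner_smul_right]
  simp [nnnorm_mul]

lemma dirDualNorm_le_of_forall (μ : Measure Ω) (eNN : (Ω → EuclideanSpace 𝕜 (Fin n)) → ℝ≥0∞)
    {g : Ω → EuclideanSpace 𝕜 (Fin n)} {a : ℝ≥0∞}
    (h : ∀ f : Ω → EuclideanSpace 𝕜 (Fin n), Measurable f → eNN f ≤ 1 →
      ∫⁻ x, (‖(inner 𝕜 (f x) (g x) : 𝕜)‖₊ : ℝ≥0∞) ∂μ ≤ a) :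
    dirDualNorm μ eNN g ≤ a :=
  iSup₂_le fun f hf => h f hf.1 hf.2

lemma le_dirDualNorm (μ : Measure Ω) (eNN : (Ω → EuclideanSpace 𝕜 (Fin n)) → ℝ≥0∞)
    {g f : Ω → EuclideanSpace 𝕜 (Fin n)} (hfm : Measurable f) (hf1 : eNN f ≤ 1) :
    ∫⁻ x, (‖(inner 𝕜 (f x) (g x) : 𝕜)‖₊ : ℝ≥0∞) ∂μ ≤ dirDualNorm μ eNN g :=
  le_iSup₂_of_le f ⟨hfm, hf1⟩ le_rfl

lemma nnnorm_inner_symm (x y : EuclideanSpace 𝕜 (Fin n)) :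
    ‖(inner 𝕜 x y : 𝕜)‖₊ = ‖(inner 𝕜 y x : 𝕜)‖₊ := by
  rw [← inner_conj_symm x y, RCLike.nnnorm_conj]

-- Step A: dual-dual ≤ eN, using homogeneity only.
lemma stepA (μ : Measure Ω) (eN : (Ω → EuclideanSpace 𝕜 (Fin n)) → ℝ≥0∞)
    (hhomog : ∀ (c : 𝕜) (f : Ω → EuclideanSpace 𝕜 (Fin n)),
      eN (fun x => c • f x) = ‖c‖₊ * eN f)
    (f : Ω → EuclideanSpace 𝕜 (Fin n)) (hf : Measurable f) :
    dirDualNorm μ (dirDualNorm μ eN) f ≤ eN f := by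
  refine dirDualNorm_le_of_forall μ _ fun g hgm hg1 => ?_
  by_cases hTop : eN f = ⊤
  · exact hTop ▸ le_top
  refine ENNReal.le_of_forall_pos_le_add fun ε hε _ => ?_
  set r : ℝ := (eN f).toReal + ε with hr
  have hr0 : 0 < r := by
    have : (0:ℝ) < ε := hε
    positivity
  -- test function h = r⁻¹ • f has eN ≤ 1
  have hnn : (‖(((r:ℝ)⁻¹ : ℝ) : 𝕜)‖₊ : ℝ≥0∞) = ENNReal.ofReal r⁻¹ := by
    rw [← ofReal_norm_eq_coe_nnnorm, RCLike.norm_ofReal, abs_of_pos (by positivity)]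
  have heh : eN (fun x => (((r:ℝ)⁻¹ : ℝ) : 𝕜) • f x) ≤ 1 := by
    rw [hhomog, hnn]
    have h1 : eN f ≤ ENNReal.ofReal r := by
      rw [hr]
      calc eN f = ENNReal.ofReal (eN f).toReal := (ENNReal.ofReal_toReal hTop).symm
      _ ≤ ENNReal.ofReal ((eN f).toReal + ε) := by
          exact ENNReal.ofReal_le_ofReal (by linarith [hε.le, (show (0:ℝ) ≤ ε from hε.le)])
    calc ENNReal.ofReal r⁻¹ * eN f ≤ ENNReal.ofReal r⁻¹ * ENNReal.ofReal r :=
          mul_le_mul_right h1 _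
    _ = ENNReal.ofReal (r⁻¹ * r) := (ENNReal.ofReal_mul (by positivity)).symm
    _ = 1 := by rw [inv_mul_cancel₀ hr0.ne']; simp
  have hterm := le_dirDualNorm μ eN (g := g)
    (hf.const_smul ((((r:ℝ)⁻¹ : ℝ) : 𝕜))) heh
  have hterm2 : ENNReal.ofReal r⁻¹ * ∫⁻ x, (‖(inner 𝕜 (f x) (g x) : 𝕜)‖₊ : ℝ≥0∞) ∂μ ≤ 1 := by
    refine le_trans (le_of_eq ?_) (hterm.trans hg1)
    rw [← lintegral_const_mul' _ _ (by simp : ENNReal.ofReal r⁻¹ ≠ ⊤)]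
    refine lintegral_congr fun x => ?_
    rw [Pi.smul_apply, inner_smul_left, nnnorm_mul, RCLike.nnnorm_conj, ENNReal.coe_mul, ← hnn]
  have hfin : ∫⁻ x, (‖(inner 𝕜 (f x) (g x) : 𝕜)‖₊ : ℝ≥0∞) ∂μ ≤ ENNReal.ofReal r := by
    have h2 : ENNReal.ofReal r * (ENNReal.ofReal r⁻¹ *
        ∫⁻ x, (‖(inner 𝕜 (f x) (g x) : 𝕜)‖₊ : ℝ≥0∞) ∂μ) ≤ ENNReal.ofReal r * 1 :=
      mul_le_mul_right hterm2 _
    calc ∫⁻ x, (‖(inner 𝕜 (f x) (g x) : 𝕜)‖₊ : ℝ≥0∞) ∂μ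
        = (ENNReal.ofReal r * ENNReal.ofReal r⁻¹) *
          ∫⁻ x, (‖(inner 𝕜 (f x) (g x) : 𝕜)‖₊ : ℝ≥0∞) ∂μ := by
          rw [← ENNReal.ofReal_mul hr0.le, mul_inv_cancel₀ hr0.ne', ENNReal.ofReal_one, one_mul]
    _ ≤ ENNReal.ofReal r * 1 := by rw [mul_assoc]; exact h2
    _ = ENNReal.ofReal r := mul_one _
  calc ∫⁻ x, (‖(inner 𝕜 (g x) (f x) : 𝕜)‖₊ : ℝ≥0∞) ∂μ
      = ∫⁻ x, (‖(inner 𝕜 (f x) (g x) : 𝕜)‖₊ : ℝ≥0∞) ∂μ :=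
        lintegral_congr fun x => by rw [nnnorm_inner_symm]
  _ ≤ ENNReal.ofReal r := hfin
  _ = ENNReal.ofReal (eN f).toReal + ENNReal.ofReal ε :=
        ENNReal.ofReal_add ENNReal.toReal_nonneg hε.le
  _ = eN f + ε := by rw [ENNReal.ofReal_toReal hTop, ENNReal.ofReal_coe_nnreal]
-- a.e. invariance of eN under the Fatou property
lemma eN_congr_ae (μ : Measure Ω) (eN : (Ω → EuclideanSpace 𝕜 (Fin n)) → ℝ≥0∞)
    (hF : ∀ (fk : ℕ → Ω → EuclideanSpace 𝕜 (Fin n)) (f : Ω → EuclideanSpace 𝕜 (Fin n)),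
        (∀ k, Measurable (fk k)) → Measurable f →
        (∀ᵐ x ∂μ, Tendsto (fun k => fk k x) atTop (𝓝 (f x))) →
        eN f ≤ atTop.liminf fun k => eN (fk k))
    {f g : Ω → EuclideanSpace 𝕜 (Fin n)} (hf : Measurable f) (hg : Measurable g)
    (hfg : f =ᵐ[μ] g) : eN f = eN g := by
  have key : ∀ f g : Ω → EuclideanSpace 𝕜 (Fin n), Measurable f → Measurable g →
      f =ᵐ[μ] g → eN f ≤ eN g := by
    intro f g hf hg hfg
    have h := hF (fun _ => g) f (fun _ => hg) hf ?_
    · simpa [Filter.liminf_const] using h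
    · filter_upwards [hfg] with x hx
      rw [hx]; exact tendsto_const_nhds
  exact le_antisymm (key f g hf hg hfg) (key g f hg hf hfg.symm)

lemma core (μ : Measure Ω) [SigmaFinite μ] (eN : (Ω → EuclideanSpace 𝕜 (Fin n)) → ℝ≥0∞)
    (hideal : ∀ (h : Ω → 𝕜) (f : Ω → EuclideanSpace 𝕜 (Fin n)),
      Measurable h → (∀ x, ‖h x‖ ≤ 1) → eN (fun x => h x • f x) ≤ eN f)
    (hhomog : ∀ (c : 𝕜) (f : Ω → EuclideanSpace 𝕜 (Fin n)),
      eN (fun x => c • f x) = ‖c‖₊ * eN f)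
    (htriangle : ∀ f g : Ω → EuclideanSpace 𝕜 (Fin n),
      eN (fun x => f x + g x) ≤ eN f + eN g)
    (hF : ∀ (fk : ℕ → Ω → EuclideanSpace 𝕜 (Fin n)) (f : Ω → EuclideanSpace 𝕜 (Fin n)),
        (∀ k, Measurable (fk k)) → Measurable f →
        (∀ᵐ x ∂μ, Tendsto (fun k => fk k x) atTop (𝓝 (f x))) →
        eN f ≤ atTop.liminf fun k => eN (fk k))
    (φ : Ω → EuclideanSpace 𝕜 (Fin n)) (hφm : Measurable φ)
    (hφ2 : MemLp φ 2 μ) (hφ : 1 < eN φ) :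
    (1 : ℝ≥0∞) ≤ dirDualNorm μ (dirDualNorm μ eN) φ := by
  classical
  -- the unit ball of X inside L²
  set B : Set (Lp (EuclideanSpace 𝕜 (Fin n)) 2 μ) :=
    {u | ∃ h : Ω → EuclideanSpace 𝕜 (Fin n), Measurable h ∧ eN h ≤ 1 ∧ (⇑u =ᵐ[μ] h)} with hB
  have heN0 : eN (fun _ : Ω => (0 : EuclideanSpace 𝕜 (Fin n))) = 0 := by
    have h := hhomog 0 (fun _ => 0)
    simpa using h
  have hconv : Convex ℝ B := by
    rintro u ⟨h₁, h₁m, h₁e, h₁ae⟩ v ⟨h₂, h₂m, h₂e, h₂ae⟩ a b ha hb hab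
    refine ⟨fun x => ((a : ℝ) : 𝕜) • h₁ x + ((b : ℝ) : 𝕜) • h₂ x,
      by exact (h₁m.const_smul ((a : ℝ) : 𝕜)).add (h₂m.const_smul ((b : ℝ) : 𝕜)), ?_, ?_⟩
    · refine le_trans (htriangle _ _) ?_
      rw [hhomog, hhomog]
      have hna : (‖((a : ℝ) : 𝕜)‖₊ : ℝ≥0∞) = ENNReal.ofReal a := by
        rw [← ofReal_norm_eq_coe_nnnorm, RCLike.norm_ofReal, abs_of_nonneg ha]
      have hnb : (‖((b : ℝ) : 𝕜)‖₊ : ℝ≥0∞) = ENNReal.ofReal b := by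
        rw [← ofReal_norm_eq_coe_nnnorm, RCLike.norm_ofReal, abs_of_nonneg hb]
      calc (‖((a : ℝ) : 𝕜)‖₊ : ℝ≥0∞) * eN h₁ + (‖((b : ℝ) : 𝕜)‖₊ : ℝ≥0∞) * eN h₂
          ≤ ENNReal.ofReal a * 1 + ENNReal.ofReal b * 1 := by
            rw [hna, hnb]; exact add_le_add (mul_le_mul_right h₁e _) (mul_le_mul_right h₂e _)
      _ = ENNReal.ofReal (a + b) := by
            rw [mul_one, mul_one, ENNReal.ofReal_add ha hb]
      _ = 1 := by rw [hab, ENNReal.ofReal_one]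
    · filter_upwards [Lp.coeFn_add (a • u) (b • v), Lp.coeFn_smul a u, Lp.coeFn_smul b v,
        h₁ae, h₂ae] with x e1 e2 e3 e4 e5
      rw [e1, Pi.add_apply, e2, e3, Pi.smul_apply, Pi.smul_apply, e4, e5,
        RCLike.real_smul_eq_coe_smul (K := 𝕜), RCLike.real_smul_eq_coe_smul (K := 𝕜)]
  have hclosed : IsClosed B := by
    refine IsSeqClosed.isClosed fun u v hu huv => ?_
    have hm : TendstoInMeasure μ (fun k => ⇑(u k)) atTop ⇑v :=
      tendstoInMeasure_of_tendsto_Lp huv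
    obtain ⟨ns, -, hae⟩ := hm.exists_seq_tendsto_ae
    choose hh hhm hhe hhae using fun i => hu (ns i)
    have hvm := Lp.aestronglyMeasurable v
    set w := hvm.mk v with hw
    have wmeas : Measurable w := hvm.stronglyMeasurable_mk.measurable
    have wae : ⇑v =ᵐ[μ] w := hvm.ae_eq_mk
    have htend : ∀ᵐ x ∂μ, Tendsto (fun i => hh i x) atTop (𝓝 (w x)) := by
      filter_upwards [hae, wae, ae_all_iff.2 fun i => hhae i] with x h1 h2 h3
      rw [← h2]
      exact h1.congr fun i => h3 i
    have heNw : eN w ≤ 1 := by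
      refine le_trans (hF (fun i => hh i) w (fun i => hhm i) wmeas htend) ?_
      calc atTop.liminf (fun i => eN (hh i)) ≤ atTop.liminf (fun _ => (1 : ℝ≥0∞)) :=
        Filter.liminf_le_liminf (Filter.Eventually.of_forall fun i => hhe i)
      _ = 1 := Filter.liminf_const 1
    exact ⟨w, wmeas, heNw, wae⟩
  set F : Lp (EuclideanSpace 𝕜 (Fin n)) 2 μ := hφ2.toLp φ with hFdef
  have hFae : ⇑F =ᵐ[μ] φ := hφ2.coeFn_toLp
  have hFnot : F ∉ B := by
    rintro ⟨h, hm, he, haeh⟩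
    have : eN φ = eN h :=
      eN_congr_ae μ eN hF hφm hm ((hFae.symm).trans haeh)
    exact absurd hφ (by rw [this]; exact not_lt.2 he)
  obtain ⟨Λ, u, hsep, hFu⟩ :=
    RCLike.geometric_hahn_banach_closed_point (𝕜 := 𝕜) hconv hclosed hFnot
  have h0B : (0 : Lp (EuclideanSpace 𝕜 (Fin n)) 2 μ) ∈ B :=
    ⟨fun _ => 0, measurable_const, by rw [heN0]; exact zero_le_one, Lp.coeFn_zero _ _ _⟩
  have hu0 : 0 < u := by
    have := hsep 0 h0B
    simpa using this
  -- Riesz representation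
  set g : Lp (EuclideanSpace 𝕜 (Fin n)) 2 μ :=
    (InnerProductSpace.toDual 𝕜 (Lp (EuclideanSpace 𝕜 (Fin n)) 2 μ)).symm Λ with hgdef
  have hgrep : ∀ w, (inner 𝕜 g w : 𝕜) = Λ w := fun w => InnerProductSpace.toDual_symm_apply
  have hgm' := Lp.aestronglyMeasurable g
  set G := hgm'.mk g with hGdef
  have hGmeas : Measurable G := hgm'.stronglyMeasurable_mk.measurable
  have hGae : ⇑g =ᵐ[μ] G := hgm'.ae_eq_mk
  -- pairing formula
  have pair : ∀ (w : Lp (EuclideanSpace 𝕜 (Fin n)) 2 μ) (ψ : Ω → EuclideanSpace 𝕜 (Fin n)),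
      ⇑w =ᵐ[μ] ψ → Integrable (fun x => (inner 𝕜 (G x) (ψ x) : 𝕜)) μ ∧
        RCLike.re (Λ w) = ∫ x, RCLike.re (inner 𝕜 (G x) (ψ x) : 𝕜) ∂μ := by
    intro w ψ hw
    have hint0 : Integrable (fun x => (inner 𝕜 (g x) (w x) : 𝕜)) μ := L2.integrable_inner g w
    have haeq : (fun x => (inner 𝕜 (g x) (w x) : 𝕜)) =ᵐ[μ] fun x => (inner 𝕜 (G x) (ψ x) : 𝕜) := by
      filter_upwards [hGae, hw] with x h1 h2
      rw [h1, h2]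
    refine ⟨hint0.congr haeq, ?_⟩
    rw [← hgrep w, L2.inner_def, ← integral_re hint0]
    exact integral_congr_ae (haeq.mono fun x hx => (congrArg RCLike.re hx))
  -- key1 : the dual norm of G is at most ofReal u
  have key1 : dirDualNorm μ eN G ≤ ENNReal.ofReal u := by
    refine iSup₂_le fun h hh => ?_
    obtain ⟨hm, he⟩ := hh
    set θ : Ω → 𝕜 := fun x => if (inner 𝕜 (G x) (h x) : 𝕜) = 0 then 1
      else ((‖(inner 𝕜 (G x) (h x) : 𝕜)‖ : ℝ) : 𝕜) / (inner 𝕜 (G x) (h x) : 𝕜) with hθdef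
    have hθm : Measurable θ := by
      refine Measurable.ite (measurableSet_eq_fun (hGmeas.inner hm) measurable_const)
        measurable_const ?_
      exact (RCLike.continuous_ofReal.measurable.comp (hGmeas.inner hm).norm).div
        (hGmeas.inner hm)
    have hθnorm : ∀ x, ‖θ x‖ ≤ 1 := by
      intro x
      by_cases hz : (inner 𝕜 (G x) (h x) : 𝕜) = 0
      · simp only [hθdef]
        rw [if_pos hz]
        exact norm_one.le
      · simp only [hθdef]
        rw [if_neg hz, norm_div, RCLike.norm_ofReal, abs_of_nonneg (norm_nonneg _),
          div_self (norm_ne_zero_iff.2 hz)]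
    have hθinner : ∀ x, (inner 𝕜 (G x) (θ x • h x) : 𝕜)
        = ((‖(inner 𝕜 (G x) (h x) : 𝕜)‖ : ℝ) : 𝕜) := by
      intro x
      rw [inner_smul_right]
      by_cases hz : (inner 𝕜 (G x) (h x) : 𝕜) = 0
      · rw [hz, mul_zero, norm_zero, RCLike.ofReal_zero]
      · simp only [hθdef]
        rw [if_neg hz]
        exact div_mul_cancel₀ _ hz
    set T : ℕ → Set Ω := fun k => spanningSets μ k ∩ {x | ‖h x‖ ≤ (k : ℝ)} with hTdef
    have hTm : ∀ k, MeasurableSet (T k) := fun k =>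
      (measurableSet_spanningSets μ k).inter (measurableSet_le hm.norm measurable_const)
    have hTmono : Monotone T := by
      intro i j hij
      refine Set.inter_subset_inter (monotone_spanningSets μ hij) (fun x hx => ?_)
      simp only [Set.mem_setOf_eq] at hx ⊢
      exact le_trans hx (Nat.cast_le.mpr hij)
    have hTcover : ∀ x, ∃ k, x ∈ T k := by
      intro x
      have h1 : x ∈ ⋃ m, spanningSets μ m := by
        rw [iUnion_spanningSets]; trivial
      obtain ⟨k₁, hk₁⟩ := Set.mem_iUnion.1 h1
      refine ⟨max k₁ ⌈‖h x‖⌉₊, monotone_spanningSets μ (le_max_left _ _) hk₁, ?_⟩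
      calc ‖h x‖ ≤ (⌈‖h x‖⌉₊ : ℝ) := Nat.le_ceil _
      _ ≤ ((max k₁ ⌈‖h x‖⌉₊ : ℕ) : ℝ) := by exact_mod_cast le_max_right _ _
    have hμT : ∀ k, μ (T k) ≠ ⊤ := fun k =>
      ((measure_mono Set.inter_subset_left).trans_lt (measure_spanningSets_lt_top μ k)).ne
    -- per-truncation estimate
    have hstep : ∀ k, ∫⁻ x, ((T k).indicator
        (fun y => (‖(inner 𝕜 (G y) (h y) : 𝕜)‖₊ : ℝ≥0∞))) x ∂μ ≤ ENNReal.ofReal u := by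
      intro k
      set c : Ω → 𝕜 := fun x => if x ∈ T k then θ x else 0 with hcdef
      have hcm : Measurable c := Measurable.ite (hTm k) hθm measurable_const
      set a : Ω → EuclideanSpace 𝕜 (Fin n) := fun x => c x • h x with hadef
      have ham : Measurable a := hcm.smul hm
      have heNa : eN a ≤ 1 := by
        refine le_trans (hideal c h hcm fun x => ?_) he
        by_cases hx : x ∈ T k
        · simp only [hcdef, if_pos hx]; exact hθnorm x
        · simp [hcdef, if_neg hx]
      have hmema : MemLp a 2 μ := by
        have hbnd : MemLp ((T k).indicator fun _ => ((k : ℝ))) 2 μ :=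
          memLp_indicator_const 2 (hTm k) _ (Or.inr (hμT k))
        refine MemLp.of_le hbnd ham.aestronglyMeasurable (Filter.Eventually.of_forall fun x => ?_)
        by_cases hx : x ∈ T k
        · rw [Set.indicator_of_mem hx]
          calc ‖a x‖ = ‖c x‖ * ‖h x‖ := norm_smul _ _
          _ ≤ 1 * (k : ℝ) := by
              refine mul_le_mul ?_ hx.2 (norm_nonneg _) zero_le_one
              simp only [hcdef, if_pos hx]; exact hθnorm x
          _ = (k : ℝ) := one_mul _
          _ ≤ ‖(k : ℝ)‖ := le_abs_self _
        · rw [Set.indicator_of_notMem hx]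
          simp [hadef, hcdef, if_neg hx]
      set aLp := hmema.toLp a with haLp
      have haB : aLp ∈ B := ⟨a, ham, heNa, hmema.coeFn_toLp⟩
      have hlt := hsep aLp haB
      obtain ⟨hint, hre⟩ := pair aLp a hmema.coeFn_toLp
      have hpt : (fun x => RCLike.re (inner 𝕜 (G x) (a x) : 𝕜))
          = fun x => ((T k).indicator (fun y => ‖(inner 𝕜 (G y) (h y) : 𝕜)‖)) x := by
        funext x
        by_cases hx : x ∈ T k
        · rw [Set.indicator_of_mem hx]
          have : a x = θ x • h x := by simp [hadef, hcdef, if_pos hx]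
          rw [this, hθinner, RCLike.ofReal_re]
        · rw [Set.indicator_of_notMem hx]
          have : a x = 0 := by simp [hadef, hcdef, if_neg hx]
          rw [this, inner_zero_right]
          simp
      have hIint : Integrable (fun x => ((T k).indicator
          (fun y => ‖(inner 𝕜 (G y) (h y) : 𝕜)‖)) x) μ := by
        rw [← hpt]; exact hint.re
      have hle : ∫ x, ((T k).indicator (fun y => ‖(inner 𝕜 (G y) (h y) : 𝕜)‖)) x ∂μ ≤ u := by
        rw [← hpt, ← hre]; exact (hlt).le
      have := ofReal_integral_eq_lintegral_ofReal hIint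
        (Filter.Eventually.of_forall fun x =>
          Set.indicator_nonneg (fun y _ => norm_nonneg _) x)
      calc ∫⁻ x, ((T k).indicator (fun y => (‖(inner 𝕜 (G y) (h y) : 𝕜)‖₊ : ℝ≥0∞))) x ∂μ
          = ∫⁻ x, ENNReal.ofReal (((T k).indicator
              (fun y => ‖(inner 𝕜 (G y) (h y) : 𝕜)‖)) x) ∂μ := by
            refine lintegral_congr fun x => ?_
            by_cases hx : x ∈ T k
            · rw [Set.indicator_of_mem hx, Set.indicator_of_mem hx, ofReal_norm_eq_coe_nnnorm]
            · rw [Set.indicator_of_notMem hx, Set.indicator_of_notMem hx, ENNReal.ofReal_zero]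
      _ = ENNReal.ofReal (∫ x, ((T k).indicator (fun y => ‖(inner 𝕜 (G y) (h y) : 𝕜)‖)) x ∂μ) :=
            this.symm
      _ ≤ ENNReal.ofReal u := ENNReal.ofReal_le_ofReal hle
    -- monotone convergence
    have hmeas_ind : ∀ k, Measurable fun x => ((T k).indicator
        (fun y => (‖(inner 𝕜 (G y) (h y) : 𝕜)‖₊ : ℝ≥0∞))) x := fun k =>
      ((hGmeas.inner hm).nnnorm.coe_nnreal_ennreal).indicator (hTm k)
    have hmono_ind : Monotone fun k => fun x => ((T k).indicator
        (fun y => (‖(inner 𝕜 (G y) (h y) : 𝕜)‖₊ : ℝ≥0∞))) x := fun i j hij x =>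
      Set.indicator_le_indicator_of_subset (hTmono hij) (fun _ => zero_le) x
    have hsup_ind : ∀ x, (⨆ k, ((T k).indicator
        (fun y => (‖(inner 𝕜 (G y) (h y) : 𝕜)‖₊ : ℝ≥0∞))) x)
        = (‖(inner 𝕜 (G x) (h x) : 𝕜)‖₊ : ℝ≥0∞) := by
      intro x
      refine le_antisymm (iSup_le fun k => Set.indicator_le_self _ _ x) ?_
      obtain ⟨k, hk⟩ := hTcover x
      exact le_iSup_of_le k (by rw [Set.indicator_of_mem hk])
    calc ∫⁻ x, (‖(inner 𝕜 (h x) (G x) : 𝕜)‖₊ : ℝ≥0∞) ∂μ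
        = ∫⁻ x, (‖(inner 𝕜 (G x) (h x) : 𝕜)‖₊ : ℝ≥0∞) ∂μ := by
          refine lintegral_congr fun x => ?_
          rw [← inner_conj_symm (G x) (h x), RCLike.nnnorm_conj]
    _ = ∫⁻ x, ⨆ k, ((T k).indicator
          (fun y => (‖(inner 𝕜 (G y) (h y) : 𝕜)‖₊ : ℝ≥0∞))) x ∂μ := by
          exact (lintegral_congr fun x => (hsup_ind x).symm)
    _ = ⨆ k, ∫⁻ x, ((T k).indicator
          (fun y => (‖(inner 𝕜 (G y) (h y) : 𝕜)‖₊ : ℝ≥0∞))) x ∂μ :=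
          lintegral_iSup hmeas_ind hmono_ind
    _ ≤ ENNReal.ofReal u := iSup_le hstep
  -- key2
  have key2 : ENNReal.ofReal u ≤ ∫⁻ x, (‖(inner 𝕜 (G x) (φ x) : 𝕜)‖₊ : ℝ≥0∞) ∂μ := by
    obtain ⟨hintφ, hreφ⟩ := pair F φ hFae
    have h1 : u ≤ ∫ x, RCLike.re (inner 𝕜 (G x) (φ x) : 𝕜) ∂μ := by
      rw [← hreφ]; exact hFu.le
    have h2 : ∫ x, RCLike.re (inner 𝕜 (G x) (φ x) : 𝕜) ∂μ
        ≤ ∫ x, ‖(inner 𝕜 (G x) (φ x) : 𝕜)‖ ∂μ :=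
      integral_mono hintφ.re hintφ.norm fun x =>
        le_trans (le_abs_self _) (RCLike.abs_re_le_norm _)
    calc ENNReal.ofReal u ≤ ENNReal.ofReal (∫ x, ‖(inner 𝕜 (G x) (φ x) : 𝕜)‖ ∂μ) :=
          ENNReal.ofReal_le_ofReal (h1.trans h2)
    _ = ∫⁻ x, ENNReal.ofReal ‖(inner 𝕜 (G x) (φ x) : 𝕜)‖ ∂μ :=
          ofReal_integral_eq_lintegral_ofReal hintφ.norm
            (Filter.Eventually.of_forall fun x => norm_nonneg _)
    _ = ∫⁻ x, (‖(inner 𝕜 (G x) (φ x) : 𝕜)‖₊ : ℝ≥0∞) ∂μ :=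
          lintegral_congr fun x => ofReal_norm_eq_coe_nnnorm _
  -- conclusion
  set h₀ : Ω → EuclideanSpace 𝕜 (Fin n) := fun x => (((u⁻¹ : ℝ)) : 𝕜) • G x with hh₀def
  have hh₀m : Measurable h₀ := hGmeas.const_smul (((u⁻¹ : ℝ)) : 𝕜)
  have hnnu : (‖(((u⁻¹ : ℝ)) : 𝕜)‖₊ : ℝ≥0∞) = ENNReal.ofReal u⁻¹ := by
    rw [← ofReal_norm_eq_coe_nnnorm, RCLike.norm_ofReal, abs_of_nonneg (by positivity)]
  have hdual : dirDualNorm μ eN h₀ ≤ 1 := by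
    refine iSup₂_le fun f' hf' => ?_
    obtain ⟨hf'm, hf'1⟩ := hf'
    have hscale : ∫⁻ x, (‖(inner 𝕜 (f' x) (h₀ x) : 𝕜)‖₊ : ℝ≥0∞) ∂μ
        = ENNReal.ofReal u⁻¹ * ∫⁻ x, (‖(inner 𝕜 (f' x) (G x) : 𝕜)‖₊ : ℝ≥0∞) ∂μ := by
      rw [← lintegral_const_mul' _ _ (by simp : ENNReal.ofReal u⁻¹ ≠ ⊤)]
      refine lintegral_congr fun x => ?_
      rw [hh₀def]
      rw [inner_smul_right, nnnorm_mul, ENNReal.coe_mul, hnnu]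
    rw [hscale]
    have hterm : ∫⁻ x, (‖(inner 𝕜 (f' x) (G x) : 𝕜)‖₊ : ℝ≥0∞) ∂μ ≤ ENNReal.ofReal u :=
      le_trans (le_iSup₂_of_le f' ⟨hf'm, hf'1⟩ le_rfl) key1
    calc ENNReal.ofReal u⁻¹ * ∫⁻ x, (‖(inner 𝕜 (f' x) (G x) : 𝕜)‖₊ : ℝ≥0∞) ∂μ
        ≤ ENNReal.ofReal u⁻¹ * ENNReal.ofReal u := mul_le_mul_right hterm _
    _ = ENNReal.ofReal (u⁻¹ * u) := (ENNReal.ofReal_mul (by positivity)).symm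
    _ = 1 := by rw [inv_mul_cancel₀ hu0.ne', ENNReal.ofReal_one]
  calc (1 : ℝ≥0∞) = ENNReal.ofReal u⁻¹ * ENNReal.ofReal u := by
        rw [← ENNReal.ofReal_mul (by positivity), inv_mul_cancel₀ hu0.ne', ENNReal.ofReal_one]
  _ ≤ ENNReal.ofReal u⁻¹ * ∫⁻ x, (‖(inner 𝕜 (G x) (φ x) : 𝕜)‖₊ : ℝ≥0∞) ∂μ :=
        mul_le_mul_right key2 _
  _ = ∫⁻ x, (‖(inner 𝕜 (h₀ x) (φ x) : 𝕜)‖₊ : ℝ≥0∞) ∂μ := by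
        rw [← lintegral_const_mul' _ _ (by simp : ENNReal.ofReal u⁻¹ ≠ ⊤)]
        refine lintegral_congr fun x => ?_
        rw [hh₀def, inner_smul_left, nnnorm_mul, ENNReal.coe_mul, RCLike.nnnorm_conj, hnnu]
  _ ≤ dirDualNorm μ (dirDualNorm μ eN) φ := le_iSup₂_of_le h₀ ⟨hh₀m, hdual⟩ le_rfl

/-- **directional Lorentz–Luxemburg theorem.** An `𝔽ⁿ`-directional Banach
function space `X` over a σ-finite measure space (encoded by its extended norm `eN`, with the
directional ideal property, homogeneity, triangle inequality, completeness in Riesz–Fischer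
form, non-degeneracy, and the directional saturation property) satisfies the Fatou property if
and only if `X` is Köthe reflexive, i.e. `X'' = X` with equal norms. -/
theorem stmt19 (μ : Measure Ω) [SigmaFinite μ]
    (eN : (Ω → EuclideanSpace 𝕜 (Fin n)) → ℝ≥0∞)
    -- directional ideal property
    (hideal : ∀ (h : Ω → 𝕜) (f : Ω → EuclideanSpace 𝕜 (Fin n)),
      Measurable h → (∀ x, ‖h x‖ ≤ 1) → eN (fun x => h x • f x) ≤ eN f)
    -- homogeneity
    (hhomog : ∀ (c : 𝕜) (f : Ω → EuclideanSpace 𝕜 (Fin n)),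
      eN (fun x => c • f x) = ‖c‖₊ * eN f)
    -- triangle inequality (the norm of `X` is a norm, not just a quasi-norm)
    (htriangle : ∀ f g : Ω → EuclideanSpace 𝕜 (Fin n),
      eN (fun x => f x + g x) ≤ eN f + eN g)
    -- completeness, in Riesz–Fischer form
    (hcomplete : ∀ fk : ℕ → Ω → EuclideanSpace 𝕜 (Fin n),
      (∀ k, Measurable (fk k)) → (∑' k, eN (fk k)) ≠ ⊤ →
      ∃ f : Ω → EuclideanSpace 𝕜 (Fin n), Measurable f ∧
        (∀ᵐ x ∂μ, HasSum (fun k => fk k x) (f x)) ∧ eN f ≠ ⊤)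
    -- non-degeneracy
    (hnondeg : ∀ g : Ω → EuclideanSpace 𝕜 (Fin n), Measurable g →
      (∀ f : Ω → EuclideanSpace 𝕜 (Fin n), Measurable f → eN f ≠ ⊤ →
        ∫ x, (inner 𝕜 (f x) (g x) : 𝕜) ∂μ = 0) →
      g =ᵐ[μ] 0)
    -- directional saturation
    (hsat : ∀ g : Ω → EuclideanSpace 𝕜 (Fin n), Measurable g → ¬ g =ᵐ[μ] 0 →
      ∃ E : Set Ω, MeasurableSet E ∧ E ⊆ {x | g x ≠ 0} ∧ 0 < μ E ∧
        eN (E.indicator g) ≠ ⊤) :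
    -- Fatou property ↔ Köthe reflexivity
    ((∀ (fk : ℕ → Ω → EuclideanSpace 𝕜 (Fin n)) (f : Ω → EuclideanSpace 𝕜 (Fin n)),
        (∀ k, Measurable (fk k)) → Measurable f →
        (∀ᵐ x ∂μ, Tendsto (fun k => fk k x) atTop (𝓝 (f x))) →
        eN f ≤ atTop.liminf fun k => eN (fk k)) ↔
      (∀ f : Ω → EuclideanSpace 𝕜 (Fin n), Measurable f →
        dirDualNorm μ (dirDualNorm μ eN) f = eN f)) := by
  constructor
  · -- Fatou ⇒ Köthe reflexive
    intro hF f hf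
    refine le_antisymm (stepA μ eN hhomog f hf) (le_of_not_gt fun hlt => ?_)
    -- suppose ‖f‖'' < ‖f‖
    obtain ⟨c, hc1, hc2⟩ := exists_between hlt
    have hcne : c ≠ ⊤ := hc2.ne_top
    have hc0 : 0 < c := lt_of_le_of_lt zero_le hc1
    set t : ℝ := c.toReal with htdef
    have ht0 : 0 < t := ENNReal.toReal_pos hc0.ne' hcne
    have htc : ENNReal.ofReal t = c := ENNReal.ofReal_toReal hcne
    set f₀ : Ω → EuclideanSpace 𝕜 (Fin n) := fun x => (((t⁻¹ : ℝ)) : 𝕜) • f x with hf₀def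
    have hf₀m : Measurable f₀ := hf.const_smul (((t⁻¹ : ℝ)) : 𝕜)
    have hnninv : (‖(((t⁻¹ : ℝ)) : 𝕜)‖₊ : ℝ≥0∞) = ENNReal.ofReal t⁻¹ := by
      rw [← ofReal_norm_eq_coe_nnnorm, RCLike.norm_ofReal, abs_of_nonneg (by positivity)]
    have hmul1 : ENNReal.ofReal t⁻¹ * c = 1 := by
      rw [← htc, ← ENNReal.ofReal_mul (by positivity), inv_mul_cancel₀ ht0.ne',
        ENNReal.ofReal_one]
    have hne0 : ENNReal.ofReal t⁻¹ ≠ 0 := by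
      simp [ENNReal.ofReal_eq_zero, not_le, ht0]
    have hneT : ENNReal.ofReal t⁻¹ ≠ ⊤ := ENNReal.ofReal_ne_top
    have heNf₀ : 1 < eN f₀ := by
      rw [hf₀def, hhomog, hnninv, ← hmul1]
      exact ENNReal.mul_lt_mul_right hne0 hneT hc2
    have hdf₀ : dirDualNorm μ (dirDualNorm μ eN) f₀ < 1 := by
      rw [hf₀def, dirDualNorm_smul, hnninv, ← hmul1]
      exact ENNReal.mul_lt_mul_right hne0 hneT hc1
    -- truncations
    set A : ℕ → Set Ω := fun m => spanningSets μ m ∩ {x | ‖f₀ x‖ ≤ (m : ℝ)} with hAdef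
    have hAm : ∀ m, MeasurableSet (A m) := fun m =>
      (measurableSet_spanningSets μ m).inter (measurableSet_le hf₀m.norm measurable_const)
    have hμA : ∀ m, μ (A m) ≠ ⊤ := fun m =>
      ((measure_mono Set.inter_subset_left).trans_lt (measure_spanningSets_lt_top μ m)).ne
    set fm : ℕ → Ω → EuclideanSpace 𝕜 (Fin n) := fun m => (A m).indicator f₀ with hfmdef
    have hfm_meas : ∀ m, Measurable (fm m) := fun m => hf₀m.indicator (hAm m)
    have hten : ∀ x, Tendsto (fun m => fm m x) atTop (𝓝 (f₀ x)) := by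
      intro x
      have h1 : x ∈ ⋃ m, spanningSets μ m := by rw [iUnion_spanningSets]; trivial
      obtain ⟨k₁, hk₁⟩ := Set.mem_iUnion.1 h1
      refine Tendsto.congr' ?_ tendsto_const_nhds
      filter_upwards [Filter.eventually_ge_atTop (max k₁ ⌈‖f₀ x‖⌉₊)] with m hm
      have hx : x ∈ A m := ⟨monotone_spanningSets μ (le_trans (le_max_left _ _) hm) hk₁, by
        calc ‖f₀ x‖ ≤ (⌈‖f₀ x‖⌉₊ : ℝ) := Nat.le_ceil _
        _ ≤ (m : ℝ) := Nat.cast_le.mpr (le_trans (le_max_right _ _) hm)⟩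
      exact (Set.indicator_of_mem hx f₀).symm
    have hex : ∃ m, 1 < eN (fm m) := by
      by_contra hall
      push_neg at hall
      have hlim := hF fm f₀ hfm_meas hf₀m (Filter.Eventually.of_forall hten)
      have : eN f₀ ≤ 1 := by
        refine hlim.trans ?_
        calc atTop.liminf (fun m => eN (fm m)) ≤ atTop.liminf (fun _ => (1 : ℝ≥0∞)) :=
          Filter.liminf_le_liminf (Filter.Eventually.of_forall fun m => hall m)
        _ = 1 := Filter.liminf_const 1
      exact absurd heNf₀ (not_lt.2 this)
    obtain ⟨m, hm1⟩ := hex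
    have hfm2 : MemLp (fm m) 2 μ := by
      have hbnd : MemLp ((A m).indicator fun _ => ((m : ℝ))) 2 μ :=
        memLp_indicator_const 2 (hAm m) _ (Or.inr (hμA m))
      refine MemLp.of_le hbnd (hfm_meas m).aestronglyMeasurable
        (Filter.Eventually.of_forall fun x => ?_)
      by_cases hx : x ∈ A m
      · simp only [hfmdef]
        rw [Set.indicator_of_mem hx, Set.indicator_of_mem hx]
        exact le_trans hx.2 (le_abs_self _)
      · simp only [hfmdef]
        rw [Set.indicator_of_notMem hx, Set.indicator_of_notMem hx]
        simp
    have hdual_fm : dirDualNorm μ (dirDualNorm μ eN) (fm m)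
        ≤ dirDualNorm μ (dirDualNorm μ eN) f₀ := by
      refine dirDualNorm_le_of_forall μ _ fun g hgm hg1 => ?_
      refine le_trans ?_ (le_dirDualNorm μ _ hgm hg1)
      refine lintegral_mono fun x => ?_
      by_cases hx : x ∈ A m
      · simp only [hfmdef]
        rw [Set.indicator_of_mem hx]
      · simp only [hfmdef]
        rw [Set.indicator_of_notMem hx, inner_zero_right]
        simp
    have hcore := core μ eN hideal hhomog htriangle hF (fm m) (hfm_meas m) hfm2 hm1
    exact absurd (hcore.trans hdual_fm) (not_le.2 hdf₀)
  · -- Köthe reflexive ⇒ Fatou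
    intro hrefl fk f hkm hfm htend
    rw [← hrefl f hfm]
    refine dirDualNorm_le_of_forall μ _ fun g hgm hg1 => ?_
    have hae : (fun x => (‖(inner 𝕜 (g x) (f x) : 𝕜)‖₊ : ℝ≥0∞))
        =ᵐ[μ] fun x => atTop.liminf fun k => (‖(inner 𝕜 (g x) (fk k x) : 𝕜)‖₊ : ℝ≥0∞) := by
      filter_upwards [htend] with x hx
      have h1 : Tendsto (fun k => (inner 𝕜 (g x) (fk k x) : 𝕜)) atTop
          (𝓝 (inner 𝕜 (g x) (f x) : 𝕜)) := Tendsto.inner tendsto_const_nhds hx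
      exact (ENNReal.tendsto_coe.2 h1.nnnorm).liminf_eq.symm
    calc ∫⁻ x, (‖(inner 𝕜 (g x) (f x) : 𝕜)‖₊ : ℝ≥0∞) ∂μ
        = ∫⁻ x, atTop.liminf (fun k => (‖(inner 𝕜 (g x) (fk k x) : 𝕜)‖₊ : ℝ≥0∞)) ∂μ :=
          lintegral_congr_ae hae
    _ ≤ atTop.liminf fun k => ∫⁻ x, (‖(inner 𝕜 (g x) (fk k x) : 𝕜)‖₊ : ℝ≥0∞) ∂μ :=
          lintegral_liminf_le fun k => (hgm.inner (hkm k)).nnnorm.coe_nnreal_ennreal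
    _ ≤ atTop.liminf fun k => eN (fk k) := by
          refine Filter.liminf_le_liminf (Filter.Eventually.of_forall fun k => ?_)
          rw [← hrefl (fk k) (hkm k)]
          exact le_dirDualNorm μ _ hgm hg1
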